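/- For every ε > 0 there exists δ > 0 such that for any C*-algebra A and any positive contractions x, a ∈ A with ‖xa − ax‖ < δ, one has ‖x^{1/2} a − a x^{1/2}‖ < ε. -/

import Mathlib

open Polynomial Finset

lemma comm_pow_bound {A : Type} [CStarAlgebra A] [Nontrivial A] (x a : A) (hx : ‖x‖ ≤ 1) (n : ℕ) :
    ‖x ^ n * a - a * x ^ n‖ ≤ n * ‖x * a - a * x‖ := by
  induction n with
  | zero => simp
  | succ n ih =>
    have key : x ^ (n + 1) * a - a * x ^ (n + 1)
        = x * (x ^ n * a - a * x ^ n) + (x * a - a * x) * x ^ n := by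
      rw [pow_succ']
      noncomm_ring
    have hxn : ‖x ^ n‖ ≤ 1 :=
      (norm_pow_le x n).trans (pow_le_one₀ (norm_nonneg x) hx)
    calc ‖x ^ (n + 1) * a - a * x ^ (n + 1)‖
        ≤ ‖x * (x ^ n * a - a * x ^ n)‖ + ‖(x * a - a * x) * x ^ n‖ := by
          rw [key]; exact norm_add_le _ _
      _ ≤ ‖x‖ * ‖x ^ n * a - a * x ^ n‖ + ‖x * a - a * x‖ * ‖x ^ n‖ :=
          add_le_add (norm_mul_le _ _) (norm_mul_le _ _)
      _ ≤ 1 * (n * ‖x * a - a * x‖) + ‖x * a - a * x‖ * 1 := by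
          gcongr
      _ = (n + 1 : ℕ) * ‖x * a - a * x‖ := by push_cast; ring

lemma comm_poly_bound {A : Type} [CStarAlgebra A] [Nontrivial A] (x a : A) (hx : ‖x‖ ≤ 1)
    (p : ℝ[X]) :
    ‖aeval x p * a - a * aeval x p‖ ≤
      (∑ i ∈ range (p.natDegree + 1), |p.coeff i| * i) * ‖x * a - a * x‖ := by
  rw [aeval_eq_sum_range]
  have : (∑ i ∈ range (p.natDegree + 1), p.coeff i • x ^ i) * a
      - a * (∑ i ∈ range (p.natDegree + 1), p.coeff i • x ^ i)
      = ∑ i ∈ range (p.natDegree + 1), p.coeff i • (x ^ i * a - a * x ^ i) := by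
    rw [Finset.sum_mul, Finset.mul_sum, ← Finset.sum_sub_distrib]
    congr 1; ext i; rw [smul_sub, smul_mul_assoc, mul_smul_comm]
  rw [this, Finset.sum_mul]
  refine (norm_sum_le _ _).trans (Finset.sum_le_sum fun i _ => ?_)
  rw [norm_smul, Real.norm_eq_abs, mul_assoc]
  exact mul_le_mul_of_nonneg_left (comm_pow_bound x a hx i) (abs_nonneg _)

theorem sqrt_approx_commute : ∀ ε : ℝ, 0 < ε → ∃ δ : ℝ, 0 < δ ∧
    ∀ (A : Type) [CStarAlgebra A] [PartialOrder A] [StarOrderedRing A]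
      (x a : A), 0 ≤ x → ‖x‖ ≤ 1 → 0 ≤ a → ‖a‖ ≤ 1 →
      ‖x * a - a * x‖ < δ →
      ‖cfc (fun t : ℝ => Real.sqrt t) x * a - a * cfc (fun t : ℝ => Real.sqrt t) x‖ < ε := by
  intro ε hε
  -- Weierstrass: approximate √ on [0,1] by a polynomial within ε/8
  obtain ⟨p, hp⟩ := exists_polynomial_near_continuousMap 0 1
    ⟨fun t => Real.sqrt t, by fun_prop⟩ (ε / 8) (by positivity)
  set C : ℝ := ∑ i ∈ range (p.natDegree + 1), |p.coeff i| * i with hC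
  have hC0 : 0 ≤ C := Finset.sum_nonneg fun i _ => by positivity
  refine ⟨ε / (2 * (C + 1)), by positivity, ?_⟩
  intro A _ _ _ x a hx hx1 ha ha1 hcomm
  rcases subsingleton_or_nontrivial A with hA | hA
  · simpa [Subsingleton.elim (cfc (fun t : ℝ => Real.sqrt t) x * a
      - a * cfc (fun t : ℝ => Real.sqrt t) x) 0] using hε
  -- the spectrum of x lies in [0,1]
  have hspec : ∀ t ∈ spectrum ℝ x, t ∈ Set.Icc (0 : ℝ) 1 := fun t ht =>
    ⟨spectrum_nonneg_of_nonneg hx ht,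
      ((Real.norm_eq_abs t ▸ spectrum.norm_le_norm_of_mem ht).trans hx1).trans'
        (le_abs_self t)⟩
  -- the polynomial approximates √ uniformly on the spectrum
  have happrox : ∀ t ∈ spectrum ℝ x, ‖Real.sqrt t - p.eval t‖ ≤ ε / 8 := by
    intro t ht
    have := ContinuousMap.norm_coe_le_norm
      (p.toContinuousMapOn (Set.Icc 0 1) - ⟨fun t => Real.sqrt t, by fun_prop⟩)
      ⟨t, hspec t ht⟩
    simp only [ContinuousMap.sub_apply, Polynomial.toContinuousMapOn_apply,
      Polynomial.toContinuousMap_apply, ContinuousMap.coe_mk] at this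
    rw [norm_sub_rev]
    exact this.trans hp.le
  -- compare cfc √ x with the polynomial applied to x
  set s := cfc (fun t : ℝ => Real.sqrt t) x with hs
  set q := aeval x p with hq
  have hsq : ‖s - q‖ ≤ ε / 8 := by
    rw [hs, hq, ← cfc_polynomial p x, ← cfc_sub _ _ x]
    exact norm_cfc_le (by positivity) happrox
  have hqa : ‖q * a - a * q‖ ≤ C * ‖x * a - a * x‖ := comm_poly_bound x a hx1 p
  have hkey : s * a - a * s = (s - q) * a - a * (s - q) + (q * a - a * q) := by noncomm_ring
  have hcn : 0 ≤ ‖x * a - a * x‖ := norm_nonneg _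
  calc ‖s * a - a * s‖
      ≤ ‖(s - q) * a‖ + ‖a * (s - q)‖ + ‖q * a - a * q‖ := by
        rw [hkey]
        exact (norm_add_le _ _).trans (add_le_add_left (norm_sub_le _ _) _)
    _ ≤ ‖s - q‖ * ‖a‖ + ‖a‖ * ‖s - q‖ + C * ‖x * a - a * x‖ :=
        add_le_add (add_le_add (norm_mul_le _ _) (norm_mul_le _ _)) hqa
    _ ≤ (ε / 8) * 1 + 1 * (ε / 8) + C * (ε / (2 * (C + 1))) := by
        gcongr
    _ < ε := by
        rw [mul_one, one_mul]
        have hpos : (0:ℝ) < 2 * (C + 1) := by positivity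
        have h1 : C * (ε / (2 * (C + 1))) < ε / 2 := by
          rw [mul_div_assoc', div_lt_div_iff₀ hpos two_pos]
          nlinarith
        linarith
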